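/- Let α ⪯ β be compositions of n. For each index 1 ≤ j ≤ ℓ(β)−1, set ξ_{α,β}(j) = j if β_j and β_{j+1} arise from the same part of α, and 0 otherwise. Then Σ_{γ: α ⪯ γ ⪯ β} (−1)^{ℓ(γ)−ℓ(β)} t^{g(γ,β)} = ∏_{j: ξ_{α,β}(j) = j} (1 − t^j) in ℤ[t], where g(γ,β) = Σ_j ξ_{γ,β}(j). -/

import Mathlib

/-- The set of proper partial sums of a composition. -/
def csub {n : ℕ} (α : Composition n) : Finset ℕ :=
  (Finset.Ico 1 α.length).image α.sizeUpTo

/-- For `γ ⪯ β`, `g(γ,β) = Σ_{j=1}^{ℓ(β)−1} ξ_{γ,β}(j)`, where `ξ_{γ,β}(j) = j` iff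
`β_j` and `β_{j+1}` arise from the same part of `γ`, i.e. the `j`-th partial sum of `β`
is not a boundary of `γ`. -/
def gwt {n : ℕ} (γ β : Composition n) : ℕ :=
  ∑ j ∈ Finset.Ico 1 β.length, if β.sizeUpTo j ∈ csub γ then 0 else j

lemma mem_csub_iff {n : ℕ} {γ : Composition n} {x : ℕ} :
    x ∈ csub γ ↔ ∃ i, 1 ≤ i ∧ i < γ.length ∧ γ.sizeUpTo i = x := by
  simp [csub, Finset.mem_image, Finset.mem_Ico, and_assoc]

lemma csub_pos {n : ℕ} {γ : Composition n} {x : ℕ} (hx : x ∈ csub γ) : 0 < x ∧ x < n := by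
  obtain ⟨i, h1, h2, rfl⟩ := mem_csub_iff.1 hx
  constructor
  · have h0 : γ.sizeUpTo 0 < γ.sizeUpTo 1 := γ.sizeUpTo_strict_mono (by omega)
    have h1' := γ.monotone_sizeUpTo h1
    rw [γ.sizeUpTo_zero] at h0
    omega
  · have hs : γ.sizeUpTo i < γ.sizeUpTo (i+1) := γ.sizeUpTo_strict_mono h2
    have h3 : γ.sizeUpTo (i+1) ≤ γ.sizeUpTo γ.length := γ.monotone_sizeUpTo (by omega)
    rw [γ.sizeUpTo_length] at h3
    omega

lemma sizeUpTo_injOn {n : ℕ} (γ : Composition n) {i j : ℕ} (hi : i ≤ γ.length)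
    (hj : j ≤ γ.length) (hij : γ.sizeUpTo i = γ.sizeUpTo j) : i = j := by
  by_contra hne
  rcases Nat.lt_or_ge i j with hlt | hge
  · have : γ.sizeUpTo i < γ.sizeUpTo j := by
      calc γ.sizeUpTo i < γ.sizeUpTo (i+1) := γ.sizeUpTo_strict_mono (by omega)
        _ ≤ γ.sizeUpTo j := γ.monotone_sizeUpTo (by omega)
    omega
  · have hlt : j < i := by omega
    have : γ.sizeUpTo j < γ.sizeUpTo i := by
      calc γ.sizeUpTo j < γ.sizeUpTo (j+1) := γ.sizeUpTo_strict_mono (by omega)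
        _ ≤ γ.sizeUpTo i := γ.monotone_sizeUpTo (by omega)
    omega

lemma image_val_boundaries {n : ℕ} (γ : Composition n) :
    γ.boundaries.image Fin.val = insert 0 (insert n (csub γ)) := by
  ext x
  simp only [Composition.boundaries, Finset.mem_image, Finset.mem_map, Finset.mem_univ,
    true_and, Finset.mem_insert, mem_csub_iff]
  constructor
  · rintro ⟨y, ⟨i, rfl⟩, rfl⟩
    have hv : (γ.boundary.toEmbedding i : ℕ) = γ.sizeUpTo i := rfl
    rw [hv]
    rcases Nat.eq_zero_or_pos (i : ℕ) with h0 | h0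
    · left; simp [h0, γ.sizeUpTo_zero]
    rcases Nat.lt_or_ge (i : ℕ) γ.length with hl | hl
    · right; right; exact ⟨i, h0, hl, rfl⟩
    · right; left; exact γ.sizeUpTo_ofLength_le _ hl
  · rintro (rfl | rfl | ⟨i, h1, h2, rfl⟩)
    · exact ⟨γ.boundary 0, ⟨0, rfl⟩, by simp⟩
    · exact ⟨γ.boundary (Fin.last _), ⟨Fin.last _, rfl⟩, by simp⟩
    · exact ⟨γ.boundary ⟨i, by omega⟩, ⟨⟨i, by omega⟩, rfl⟩, rfl⟩

lemma csub_injective {n : ℕ} : Function.Injective (csub (n := n)) := by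
  intro γ γ' hcs
  have hb : γ.boundaries = γ'.boundaries := by
    have h2 : insert 0 (insert n (csub γ)) = insert 0 (insert n (csub γ')) := by rw [hcs]
    rw [← image_val_boundaries, ← image_val_boundaries] at h2
    exact Finset.image_injective Fin.val_injective h2
  have : γ.toCompositionAsSet = γ'.toCompositionAsSet := CompositionAsSet.ext hb
  exact (compositionEquiv n).injective this

open Fin.NatCast in
lemma exists_csub {n : ℕ} (β : Composition n) (T : Finset ℕ) (hT : T ⊆ csub β) :
    ∃ γ : Composition n, csub γ = T := by
  have hbd : ∀ x ∈ T, 0 < x ∧ x < n := fun x hx => csub_pos (hT hx)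
  set B : Finset (Fin (n+1)) :=
    insert 0 (insert (Fin.last n) (T.image (fun t : ℕ => (t : Fin (n+1))))) with hB
  refine ⟨(⟨B, by simp [hB], by simp [hB]⟩ : CompositionAsSet n).toComposition, ?_⟩
  set γ := (⟨B, by simp [hB], by simp [hB]⟩ : CompositionAsSet n).toComposition with hγ
  have hbound : γ.boundaries = B := CompositionAsSet.toComposition_boundaries _
  have himg : B.image Fin.val = insert 0 (insert n T) := by
    ext x
    constructor
    · intro hx
      rw [Finset.mem_image] at hx
      obtain ⟨y, hy, rfl⟩ := hx
      rw [hB] at hy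
      simp only [Finset.mem_insert, Finset.mem_image] at hy
      rcases hy with rfl | rfl | ⟨t, ht, rfl⟩
      · simp
      · simp [Fin.val_last]
      · simp only [Finset.mem_insert]
        right; right
        rwa [Fin.val_cast_of_lt (by have := (hbd t ht).2; omega)]
    · intro hx
      simp only [Finset.mem_insert] at hx
      rw [Finset.mem_image]
      rcases hx with rfl | rfl | hx
      · exact ⟨0, by simp [hB], rfl⟩
      · exact ⟨Fin.last _, by simp [hB], Fin.val_last _⟩
      · refine ⟨(x : Fin (n+1)), ?_, Fin.val_cast_of_lt (by have := (hbd x hx).2; omega)⟩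
        rw [hB]
        simp only [Finset.mem_insert, Finset.mem_image]
        right; right; exact ⟨x, hx, rfl⟩
  have himg2 := himg
  rw [← hbound, image_val_boundaries] at himg2
  ext x
  constructor
  · intro hx
    have hb := csub_pos hx
    have hmem : x ∈ insert 0 (insert n T) := by rw [← himg2]; simp [hx]
    simp only [Finset.mem_insert] at hmem
    rcases hmem with rfl | rfl | hmem
    · omega
    · omega
    · exact hmem
  · intro hx
    have hb := hbd x hx
    have hmem : x ∈ insert 0 (insert n (csub γ)) := by rw [himg2]; simp [hx]
    simp only [Finset.mem_insert] at hmem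
    rcases hmem with rfl | rfl | hmem
    · omega
    · omega
    · exact hmem

lemma csub_char {n : ℕ} (β γ : Composition n) (hsub : csub γ ⊆ csub β) :
    csub γ = ((Finset.Ico 1 β.length).filter (fun j => β.sizeUpTo j ∈ csub γ)).image
      β.sizeUpTo := by
  ext x
  simp only [Finset.mem_image, Finset.mem_filter, Finset.mem_Ico]
  constructor
  · intro hx
    obtain ⟨j, h1, h2, h3⟩ := mem_csub_iff.1 (hsub hx)
    exact ⟨j, ⟨⟨h1, h2⟩, h3 ▸ hx⟩, h3⟩
  · rintro ⟨j, ⟨_, hj⟩, rfl⟩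
    exact hj

lemma injOn_Ico {n : ℕ} (β : Composition n) :
    Set.InjOn β.sizeUpTo (Finset.Ico 1 β.length) := by
  intro i hi j hj hij
  simp only [Finset.coe_Ico, Set.mem_Ico] at hi hj
  exact sizeUpTo_injOn β (by omega) (by omega) hij

lemma card_csub {n : ℕ} (γ : Composition n) : (csub γ).card = γ.length - 1 := by
  rw [csub, Finset.card_image_of_injOn (injOn_Ico γ), Nat.card_Ico]

lemma length_zero_iff {n : ℕ} (γ : Composition n) : γ.length = 0 ↔ n = 0 := by
  constructor
  · intro h
    have hb : γ.blocks = [] := List.length_eq_zero_iff.1 h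
    rw [← γ.blocks_sum, hb]
    rfl
  · intro h
    subst h
    have := γ.length_le
    omega

lemma length_sub_eq {n : ℕ} (β γ : Composition n) (hsub : csub γ ⊆ csub β) :
    β.length - γ.length =
      ((Finset.Ico 1 β.length).filter (fun j => β.sizeUpTo j ∉ csub γ)).card := by
  have hcard : ((Finset.Ico 1 β.length).filter (fun j => β.sizeUpTo j ∈ csub γ)).card
      = γ.length - 1 := by
    have h1 : (csub γ).card
        = ((Finset.Ico 1 β.length).filter (fun j => β.sizeUpTo j ∈ csub γ)).card := by
      conv_lhs => rw [csub_char β γ hsub]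
      exact Finset.card_image_of_injOn (fun i hi j hj hij =>
        injOn_Ico β (by simpa using (Finset.mem_filter.1 hi).1)
          (by simpa using (Finset.mem_filter.1 hj).1) hij)
    rw [← h1, card_csub]
  have hsplit := Finset.card_filter_add_card_filter_not
    (s := Finset.Ico 1 β.length) (p := fun j => β.sizeUpTo j ∈ csub γ)
  rw [Nat.card_Ico] at hsplit
  have hlen : γ.length ≤ β.length := by
    have := Finset.card_le_card hsub
    rw [card_csub, card_csub] at this
    rcases Nat.eq_zero_or_pos γ.length with h0 | h0
    · omega
    · have : 0 < n := by
        rcases Nat.eq_zero_or_pos n with rfl | h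
        · exact absurd ((length_zero_iff γ).2 rfl) (by omega)
        · exact h
      have hb : 0 < β.length := β.length_pos_of_pos this
      omega
  rcases Nat.eq_zero_or_pos γ.length with h0 | h0
  · have hn : n = 0 := (length_zero_iff γ).1 h0
    have hb : β.length = 0 := (length_zero_iff β).2 hn
    rw [h0, hb]
    simp
  · omega

lemma gwt_eq_sum {n : ℕ} (γ β : Composition n) :
    gwt γ β = ∑ j ∈ (Finset.Ico 1 β.length).filter (fun j => β.sizeUpTo j ∉ csub γ), j := by
  rw [gwt, Finset.sum_filter]
  refine Finset.sum_congr rfl fun j _ => ?_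
  by_cases h : β.sizeUpTo j ∈ csub γ <;> simp [h]

open Polynomial in
theorem M_MG_product_formula (n : ℕ) (α β : Composition n) (h : csub α ⊆ csub β) :
    (∑ γ ∈ Finset.univ.filter
        (fun γ : Composition n => csub α ⊆ csub γ ∧ csub γ ⊆ csub β),
      ((-1 : Polynomial ℤ) ^ (β.length - γ.length) * X ^ gwt γ β)) =
    ∏ j ∈ (Finset.Ico 1 β.length).filter (fun j => β.sizeUpTo j ∉ csub α),
      (1 - X ^ j) := by
  set J := (Finset.Ico 1 β.length).filter (fun j => β.sizeUpTo j ∉ csub α) with hJ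
  have hRHS : ∏ j ∈ J, ((1 : Polynomial ℤ) - X ^ j)
      = ∑ S ∈ J.powerset, ((-1 : Polynomial ℤ) ^ S.card * X ^ (∑ j ∈ S, j)) := by
    have h1 : ∀ j ∈ J, ((1 : Polynomial ℤ) - X ^ j) = -X ^ j + 1 := fun j _ => by ring
    rw [Finset.prod_congr rfl h1, Finset.prod_add]
    refine Finset.sum_congr rfl fun S _ => ?_
    rw [Finset.prod_const_one, mul_one]
    have : ∀ j ∈ S, (-X ^ j : Polynomial ℤ) = (-1) * X ^ j := fun j _ => by ring
    rw [Finset.prod_congr rfl this, Finset.prod_mul_distrib, Finset.prod_const,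
      Finset.prod_pow_eq_pow_sum]
  rw [hRHS]
  refine Finset.sum_bij
    (fun γ _ => (Finset.Ico 1 β.length).filter (fun j => β.sizeUpTo j ∉ csub γ))
    ?_ ?_ ?_ ?_
  · -- maps into powerset of J
    intro γ hγ
    rw [Finset.mem_filter] at hγ
    obtain ⟨_, hαγ, _⟩ := hγ
    rw [Finset.mem_powerset]
    intro j hj
    rw [Finset.mem_filter] at hj ⊢
    exact ⟨hj.1, fun hmem => hj.2 (hαγ hmem)⟩
  · -- injective
    intro γ₁ hγ₁ γ₂ hγ₂ heq
    rw [Finset.mem_filter] at hγ₁ hγ₂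
    apply csub_injective
    rw [csub_char β γ₁ hγ₁.2.2, csub_char β γ₂ hγ₂.2.2]
    congr 1
    ext j
    simp only [Finset.mem_filter, Finset.mem_Ico]
    have := Finset.ext_iff.1 heq j
    simp only [Finset.mem_filter, Finset.mem_Ico] at this
    constructor
    · rintro ⟨hj, hmem⟩
      refine ⟨hj, ?_⟩
      by_contra hne
      exact hne ((not_not.1 fun hne2 => (this.2 ⟨hj, hne2⟩).2 hmem))
    · rintro ⟨hj, hmem⟩
      refine ⟨hj, ?_⟩
      by_contra hne
      exact hne ((not_not.1 fun hne2 => (this.1 ⟨hj, hne2⟩).2 hmem))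
  · -- surjective
    intro S hS
    rw [Finset.mem_powerset] at hS
    set T := ((Finset.Ico 1 β.length).filter (fun j => j ∉ S)).image β.sizeUpTo with hT
    have hTβ : T ⊆ csub β := by
      intro x hx
      rw [hT, Finset.mem_image] at hx
      obtain ⟨j, hj, rfl⟩ := hx
      rw [Finset.mem_filter] at hj
      exact Finset.mem_image_of_mem _ hj.1
    obtain ⟨γ, hγ⟩ := exists_csub β T hTβ
    have hSJ : ∀ j ∈ S, j ∈ Finset.Ico 1 β.length ∧ β.sizeUpTo j ∉ csub α := by
      intro j hj
      have := hS hj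
      rw [hJ, Finset.mem_filter] at this
      exact this
    have key : ∀ j ∈ Finset.Ico 1 β.length, (β.sizeUpTo j ∈ T ↔ j ∉ S) := by
      intro j hj
      rw [hT, Finset.mem_image]
      constructor
      · rintro ⟨j', hj', hjj'⟩
        rw [Finset.mem_filter] at hj'
        have : j' = j := injOn_Ico β (by simpa using hj'.1) (by simpa using hj) hjj'
        exact this ▸ hj'.2
      · intro hjS
        exact ⟨j, Finset.mem_filter.2 ⟨hj, hjS⟩, rfl⟩
    have hαγ : csub α ⊆ csub γ := by
      intro x hx
      obtain ⟨j, h1, h2, h3⟩ := mem_csub_iff.1 (h hx)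
      rw [hγ, ← h3, key j (by simp [Finset.mem_Ico]; omega)]
      intro hjS
      exact (hSJ j hjS).2 (h3 ▸ hx)
    refine ⟨γ, Finset.mem_filter.2 ⟨Finset.mem_univ _, hαγ, hγ ▸ hTβ⟩, ?_⟩
    ext j
    rw [Finset.mem_filter]
    constructor
    · rintro ⟨hj, hmem⟩
      rw [hγ] at hmem
      by_contra hjS
      exact hmem ((key j hj).2 hjS)
    · intro hjS
      have hj := (hSJ j hjS).1
      refine ⟨hj, ?_⟩
      rw [hγ, key j hj]
      simp [hjS]
  · -- terms agree
    intro γ hγ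
    rw [Finset.mem_filter] at hγ
    rw [gwt_eq_sum, length_sub_eq β γ hγ.2.2]
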